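/- Let a graph G of order n be factored into graphs H and K. If G contains no 4-cycle and has no isolated vertices, then n is even. -/
import Mathlib


open SimpleGraph Matrix Finset

private lemma rowSum17 {n : ℕ} (G : SimpleGraph (Fin n)) [DecidableRel G.Adj] (v : Fin n) :
    ∑ w, G.adjMatrix ℝ v w = (G.degree v : ℝ) := by
  simp only [adjMatrix_apply, Finset.sum_boole, SimpleGraph.degree,
    neighborFinset_eq_filter]

private lemma adjPos17 {n : ℕ} (G : SimpleGraph (Fin n)) [DecidableRel G.Adj] {v w : Fin n}
    (h : (0:ℝ) < G.adjMatrix ℝ v w) : G.Adj v w := by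
  by_contra hc
  simp [adjMatrix_apply, hc] at h

private lemma adjNonneg17 {n : ℕ} (G : SimpleGraph (Fin n)) [DecidableRel G.Adj] (v w : Fin n) :
    (0:ℝ) ≤ G.adjMatrix ℝ v w := by
  simp only [adjMatrix_apply]
  split <;> norm_num

theorem stmt17 {n : ℕ} (G H K : SimpleGraph (Fin n))
    [DecidableRel G.Adj] [DecidableRel H.Adj] [DecidableRel K.Adj]
    (hfac : G.adjMatrix ℝ = H.adjMatrix ℝ * K.adjMatrix ℝ)
    (hC4 : ∀ a b c d : Fin n, G.Adj a b → G.Adj b c → G.Adj c d → G.Adj d a →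
      a = c ∨ b = d)
    (hiso : ∀ v, 0 < G.degree v) :
    Even n := by
  classical
  have hA : ∀ v w, G.adjMatrix ℝ v w = ∑ u, H.adjMatrix ℝ v u * K.adjMatrix ℝ u w := by
    intro v w
    rw [hfac, Matrix.mul_apply]
  -- every vertex has positive H-degree
  have hHpos : ∀ v, 0 < H.degree v := by
    intro v
    obtain ⟨w, hw⟩ := (G.degree_pos_iff_exists_adj v).1 (hiso v)
    have h1 : G.adjMatrix ℝ v w ≠ 0 := by simp [hw]
    rw [hA] at h1
    obtain ⟨u, _, hu⟩ := Finset.exists_ne_zero_of_sum_ne_zero h1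
    have : H.adjMatrix ℝ v u ≠ 0 := fun h => hu (by rw [h, zero_mul])
    have hadj : H.Adj v u := by
      by_contra hc; exact this (by simp [adjMatrix_apply, hc])
    exact (H.degree_pos_iff_exists_adj v).2 ⟨u, hadj⟩
  have hKpos : ∀ v, 0 < K.degree v := by
    intro v
    obtain ⟨w, hw⟩ := (G.degree_pos_iff_exists_adj v).1 (hiso v)
    have h1 : G.adjMatrix ℝ w v ≠ 0 := by simp [hw.symm]
    rw [hA] at h1
    obtain ⟨u, _, hu⟩ := Finset.exists_ne_zero_of_sum_ne_zero h1
    have : K.adjMatrix ℝ u v ≠ 0 := fun h => hu (by rw [h, mul_zero])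
    have hadj : K.Adj u v := by
      by_contra hc; exact this (by simp [adjMatrix_apply, hc])
    exact (K.degree_pos_iff_exists_adj v).2 ⟨u, hadj.symm⟩
  -- adjacency between H-neighbors and K-neighbors of a common vertex
  have hadjHK : ∀ v x y, H.Adj v x → K.Adj v y → G.Adj x y := by
    intro v x y hx hy
    apply adjPos17
    rw [hA]
    apply Finset.sum_pos' (fun i _ => mul_nonneg (adjNonneg17 H x i) (adjNonneg17 K i y))
    refine ⟨v, Finset.mem_univ v, ?_⟩
    simp [adjMatrix_apply, hx.symm, hy]
  -- each vertex has H-degree 1 or K-degree 1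
  have hmin : ∀ v, H.degree v = 1 ∨ K.degree v = 1 := by
    intro v
    by_contra hc
    push_neg at hc
    have h2 : 1 < H.degree v := lt_of_le_of_ne (hHpos v) (Ne.symm hc.1)
    have h3 : 1 < K.degree v := lt_of_le_of_ne (hKpos v) (Ne.symm hc.2)
    obtain ⟨a, ha, b, hb, hab⟩ := Finset.one_lt_card.1 h2
    obtain ⟨c, hcm, d, hd, hcd⟩ := Finset.one_lt_card.1 h3
    rw [SimpleGraph.mem_neighborFinset] at ha hb
    rw [SimpleGraph.mem_neighborFinset] at hcm hd
    rcases hC4 a c b d (hadjHK v a c ha hcm) (hadjHK v b c hb hcm).symm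
      (hadjHK v b d hb hd) (hadjHK v a d ha hd).symm with h | h
    · exact hab h
    · exact hcd h
  -- sum identity over the reals
  have hsum : ∑ v, G.degree v = ∑ v, H.degree v * K.degree v := by
    have hreal : (↑(∑ v, G.degree v) : ℝ) = ↑(∑ v, H.degree v * K.degree v) := by
      push_cast
      calc ∑ v, (G.degree v : ℝ) = ∑ v, ∑ w, G.adjMatrix ℝ v w :=
            Finset.sum_congr rfl fun v _ => (rowSum17 G v).symm
        _ = ∑ v, ∑ w, ∑ u, H.adjMatrix ℝ v u * K.adjMatrix ℝ u w := by
            simp only [hA]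
        _ = ∑ v, ∑ u, ∑ w, H.adjMatrix ℝ v u * K.adjMatrix ℝ u w :=
            Finset.sum_congr rfl fun v _ => Finset.sum_comm
        _ = ∑ u, ∑ v, ∑ w, H.adjMatrix ℝ v u * K.adjMatrix ℝ u w :=
            Finset.sum_comm
        _ = ∑ u, (∑ v, H.adjMatrix ℝ v u) * (∑ w, K.adjMatrix ℝ u w) := by
            simp_rw [Finset.sum_mul, Finset.mul_sum]
        _ = ∑ u, (H.degree u : ℝ) * (K.degree u : ℝ) := by
            congr 1
            ext u
            rw [rowSum17]
            congr 1
            rw [← rowSum17 H u]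
            congr 1
            ext v
            simp [adjMatrix_apply, SimpleGraph.adj_comm]
    exact_mod_cast hreal
  have hkey : ∑ v, (H.degree v * K.degree v + 1) = ∑ v, (H.degree v + K.degree v) := by
    apply Finset.sum_congr rfl
    intro v _
    rcases hmin v with h | h
    · rw [h]; ring
    · rw [h]; ring
  have e1 : Even (∑ v, G.degree v) := by
    rw [G.sum_degrees_eq_twice_card_edges]; exact even_two_mul _
  have e2 : Even (∑ v, H.degree v) := by
    rw [H.sum_degrees_eq_twice_card_edges]; exact even_two_mul _
  have e3 : Even (∑ v, K.degree v) := by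
    rw [K.sum_degrees_eq_twice_card_edges]; exact even_two_mul _
  rw [Finset.sum_add_distrib, Finset.sum_const, Finset.card_univ, Fintype.card_fin,
    smul_eq_mul, mul_one, Finset.sum_add_distrib, ← hsum] at hkey
  obtain ⟨x, hx⟩ := e1
  obtain ⟨y, hy⟩ := e2
  obtain ⟨z, hz⟩ := e3
  refine ⟨y + z - x, ?_⟩
  omega
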